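/- With the setup of the dilution of a random germ: for U₁, U₂ real random variables such that U₁ − U₂ is Gaussian with mean 0 and variance d > 0, independent of (ε, X), with X having positive density ϖ on ℝ, and Y_i = ε f(U_i − X)/√(ϖ(X)), one has E[Y₁ Y₂] = E[ψ_f(√d · Z)] where Z ~ N(0,1). -/

import Mathlib

open MeasureTheory ProbabilityTheory Real
open scoped NNReal

lemma l2_mul_integrable {α : Type*} [MeasurableSpace α] {μ : Measure α} {g₁ g₂ : α → ℝ}
    (h₁ : MemLp g₁ 2 μ) (h₂ : MemLp g₂ 2 μ) :
    Integrable (fun x => g₁ x * g₂ x) μ := by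
  refine Integrable.mono' ((h₁.integrable_sq.add h₂.integrable_sq).div_const 2)
    (h₁.1.mul h₂.1) (Filter.Eventually.of_forall fun x => ?_)
  rw [Real.norm_eq_abs, abs_mul]; simp only [Pi.add_apply]
  nlinarith [sq_nonneg (|g₁ x| - |g₂ x|), sq_abs (g₁ x), sq_abs (g₂ x),
    abs_nonneg (g₁ x), abs_nonneg (g₂ x)]

theorem random_germ_dilution_covariance
    {Ω : Type*} [MeasureSpace Ω] [IsProbabilityMeasure (ℙ : Measure Ω)]
    (ε X U₁ U₂ : Ω → ℝ)
    (hεmeas : Measurable ε) (hXmeas : Measurable X)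
    (hU₁meas : Measurable U₁) (hU₂meas : Measurable U₂)
    -- ε is Rademacher
    (hε : Measure.map ε ℙ = (2⁻¹ : ENNReal) • (Measure.dirac (1 : ℝ) + Measure.dirac (-1 : ℝ)))
    -- X has everywhere-positive density ϖ
    (ϖ : ℝ → ℝ) (hϖmeas : Measurable ϖ) (hϖpos : ∀ x, 0 < ϖ x)
    (hX : Measure.map X ℙ = volume.withDensity (fun x => ENNReal.ofReal (ϖ x)))
    -- (U₁, U₂) is independent of (ε, X), and ε is independent of X
    (hIndepU : IndepFun (fun x => (U₁ x, U₂ x)) (fun x => (ε x, X x)) ℙ)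
    (hIndepεX : IndepFun ε X ℙ)
    -- U₁ − U₂ is Gaussian with mean 0 and variance d > 0
    (d : ℝ≥0) (hd : 0 < d)
    (hU : Measure.map (fun x => U₁ x - U₂ x) ℙ = gaussianReal 0 d)
    (f : ℝ → ℝ) (hf : MemLp f 2 volume)
    (ψ : ℝ → ℝ) (hψ : ∀ h : ℝ, ψ h = ∫ x, f (x + h) * f x)
    (Y₁ Y₂ : Ω → ℝ)
    (hY₁ : Y₁ = fun x => ε x * f (U₁ x - X x) / Real.sqrt (ϖ (X x)))
    (hY₂ : Y₂ = fun x => ε x * f (U₂ x - X x) / Real.sqrt (ϖ (X x))) :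
    ∫ x, Y₁ x * Y₂ x ∂ℙ = ∫ z, ψ (Real.sqrt d * z) ∂(gaussianReal 0 1) := by
  -- measurable representative of f
  set F : ℝ → ℝ := hf.1.mk f with hFdef
  have hFsm : StronglyMeasurable F := hf.1.stronglyMeasurable_mk
  have hFmeas : Measurable F := hFsm.measurable
  have hfF : f =ᵐ[volume] F := hf.1.ae_eq_mk
  have hFL2 : MemLp F 2 volume := hf.ae_eq hfF
  -- the laws
  set V : Ω → ℝ × ℝ := fun ω => (U₁ ω, U₂ ω) with hVdef
  have hVmeas : Measurable V := hU₁meas.prodMk hU₂meas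
  set μ₂ : Measure (ℝ × ℝ) := Measure.map V ℙ with hμ₂def
  set ν : Measure ℝ := volume.withDensity (fun x => ENNReal.ofReal (ϖ x)) with hνdef
  haveI : IsProbabilityMeasure μ₂ := Measure.isProbabilityMeasure_map hVmeas.aemeasurable
  haveI : IsProbabilityMeasure ν := hX ▸ Measure.isProbabilityMeasure_map hXmeas.aemeasurable
  set P : Ω → (ℝ × ℝ) × ℝ := fun ω => (V ω, X ω) with hPdef
  have hPmeas : Measurable P := hVmeas.prodMk hXmeas
  have hVX : IndepFun V X ℙ := hIndepU.comp measurable_id measurable_snd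
  have hmap : Measure.map P ℙ = μ₂.prod ν := by
    rw [← hX]
    exact (indepFun_iff_map_prod_eq_prod_map_map hVmeas.aemeasurable hXmeas.aemeasurable).mp hVX
  -- ψ in terms of F
  have hψF : ∀ h : ℝ, ψ h = ∫ x, F (x + h) * F x := by
    intro h
    rw [hψ h]
    refine integral_congr_ae (Filter.EventuallyEq.mul ?_ hfF)
    have hmapv : Measure.map (fun x : ℝ => x + h) volume = volume :=
      map_add_right_eq_self volume h
    have := ae_eq_comp (f := fun x : ℝ => x + h) (g := f) (g' := F)
      (measurable_add_const h).aemeasurable (by rw [hmapv]; exact hfF)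
    exact this
  have hψmeas : Measurable ψ := by
    have : ψ = fun h => ∫ x, (fun p : ℝ × ℝ => F (p.2 + p.1) * F p.2) (h, x) := by
      funext h; exact hψF h
    rw [this]
    exact (StronglyMeasurable.integral_prod_right'
      ((hFsm.comp_measurable (measurable_snd.add measurable_fst)).mul
        (hFsm.comp_measurable measurable_snd))).measurable
  -- the kernel function
  set G : (ℝ × ℝ) × ℝ → ℝ :=
    fun p => F (p.1.1 - p.2) * F (p.1.2 - p.2) / ϖ p.2 with hGdef
  have hGmeas : Measurable G :=
    ((hFmeas.comp (measurable_fst.fst.sub measurable_snd)).mul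
      (hFmeas.comp (measurable_fst.snd.sub measurable_snd))).div
      (hϖmeas.comp measurable_snd)
  -- ε² = 1 a.s.
  have hε2 : ∀ᵐ ω ∂ℙ, ε ω ^ 2 = 1 := by
    have hSmeas : MeasurableSet {x : ℝ | x ^ 2 = 1} :=
      (measurable_id.pow_const 2) (measurableSet_singleton 1)
    rw [ae_iff]
    have : {ω | ¬ ε ω ^ 2 = 1} = ε ⁻¹' {x : ℝ | x ^ 2 = 1}ᶜ := rfl
    rw [this, ← Measure.map_apply hεmeas hSmeas.compl, hε]
    simp only [Measure.smul_apply, Measure.add_apply, smul_eq_mul]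
    rw [Measure.dirac_apply' _ hSmeas.compl, Measure.dirac_apply' _ hSmeas.compl]
    have h1 : (1 : ℝ) ∈ {x : ℝ | x ^ 2 = 1} := by norm_num
    have h2 : (-1 : ℝ) ∈ {x : ℝ | x ^ 2 = 1} := by norm_num
    rw [Set.indicator_of_notMem (by simpa using h1), Set.indicator_of_notMem (by simpa using h2)]
    simp
  -- f = F along U₁ - X and U₂ - X a.s.
  have hNnull : volume {y | f y ≠ F y} = 0 := ae_iff.mp hfF
  set N' : Set ℝ := toMeasurable volume {y | f y ≠ F y} with hN'def
  have hN'meas : MeasurableSet N' := measurableSet_toMeasurable _ _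
  have hN'null : volume N' = 0 := by rw [measure_toMeasurable]; exact hNnull
  have key : ∀ (g : ℝ × ℝ → ℝ), Measurable g →
      (∀ᵐ ω ∂ℙ, f (g (V ω) - X ω) = F (g (V ω) - X ω)) := by
    intro g hg
    have hSmeas : MeasurableSet {p : (ℝ × ℝ) × ℝ | g p.1 - p.2 ∈ N'} :=
      ((hg.comp measurable_fst).sub measurable_snd) hN'meas
    have hnull : (μ₂.prod ν) {p : (ℝ × ℝ) × ℝ | g p.1 - p.2 ∈ N'} = 0 := by
      rw [Measure.measure_prod_null hSmeas]
      refine Filter.Eventually.of_forall fun u => ?_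
      show ν ((fun x : ℝ => g u - x) ⁻¹' N') = 0
      refine (withDensity_absolutelyContinuous volume _) ?_
      rw [(Measure.measurePreserving_sub_left volume (g u)).measure_preimage
        hN'meas.nullMeasurableSet]
      exact hN'null
    have hpre : ℙ (P ⁻¹' {p : (ℝ × ℝ) × ℝ | g p.1 - p.2 ∈ N'}) = 0 := by
      rw [← Measure.map_apply hPmeas hSmeas, hmap]; exact hnull
    have : ∀ᵐ ω ∂ℙ, g (V ω) - X ω ∉ N' := by
      rw [ae_iff]
      have hset : {ω | ¬ g (V ω) - X ω ∉ N'} = P ⁻¹' {p : (ℝ × ℝ) × ℝ | g p.1 - p.2 ∈ N'} := by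
        ext ω; simp [not_not]; exact Iff.rfl
      rw [hset]; exact hpre
    filter_upwards [this] with ω hω
    by_contra hne
    exact hω (subset_toMeasurable _ _ hne)
  have haeU₁ : ∀ᵐ ω ∂ℙ, f (U₁ ω - X ω) = F (U₁ ω - X ω) := key Prod.fst measurable_fst
  have haeU₂ : ∀ᵐ ω ∂ℙ, f (U₂ ω - X ω) = F (U₂ ω - X ω) := key Prod.snd measurable_snd
  -- pointwise identification
  have stepae : ∀ᵐ ω ∂ℙ, Y₁ ω * Y₂ ω = G (P ω) := by
    filter_upwards [hε2, haeU₁, haeU₂] with ω h1 h2 h3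
    rw [hY₁, hY₂]
    simp only [hGdef, hPdef, hVdef]
    rw [h2, h3]
    have hs : Real.sqrt (ϖ (X ω)) * Real.sqrt (ϖ (X ω)) = ϖ (X ω) :=
      Real.mul_self_sqrt (hϖpos _).le
    have : ε ω * F (U₁ ω - X ω) / Real.sqrt (ϖ (X ω)) *
        (ε ω * F (U₂ ω - X ω) / Real.sqrt (ϖ (X ω)))
        = ε ω ^ 2 * (F (U₁ ω - X ω) * F (U₂ ω - X ω))
          / (Real.sqrt (ϖ (X ω)) * Real.sqrt (ϖ (X ω))) := by ring
    rw [this, h1, one_mul, hs]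
  -- inner integral
  have harg : ∀ (a b x : ℝ), a - b + (b - x) = a - x := by intros; ring
  have hinner : ∀ u : ℝ × ℝ, ∫ x, G (u, x) ∂ν = ψ (u.1 - u.2) := by
    intro u
    rw [hνdef]
    rw [show (fun x => ENNReal.ofReal (ϖ x)) = (fun x => ((ϖ x).toNNReal : ENNReal)) from rfl]
    rw [integral_withDensity_eq_integral_smul hϖmeas.real_toNNReal]
    have h1 : (fun x => (ϖ x).toNNReal • G (u, x))
        = fun x => F (u.1 - x) * F (u.2 - x) := by
      funext x
      rw [NNReal.smul_def, Real.coe_toNNReal _ (hϖpos x).le]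
      simp only [hGdef, smul_eq_mul]
      rw [mul_div_assoc', mul_div_cancel_left₀ _ (hϖpos x).ne']
    rw [h1]
    have h2 : (fun x => F (u.1 - x) * F (u.2 - x))
        = fun x => (fun y => F (u.1 - u.2 + y) * F y) (u.2 - x) := by
      funext x; simp only; rw [harg]
    rw [h2, integral_sub_left_eq_self (fun y => F (u.1 - u.2 + y) * F y) volume u.2, hψF]
    congr 1; funext y; rw [add_comm]
  -- slice integrability
  have hwd : ∀ g : ℝ → ℝ,
      Integrable g ν ↔ Integrable (fun x => g x * ϖ x) volume := by
    intro g
    have hfe : (fun x => g x * (ENNReal.ofReal (ϖ x)).toReal) = fun x => g x * ϖ x := by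
      funext x; rw [ENNReal.toReal_ofReal (hϖpos x).le]
    rw [hνdef, integrable_withDensity_iff hϖmeas.ennreal_ofReal
      (Filter.Eventually.of_forall fun x => ENNReal.ofReal_lt_top), hfe]
  have hFtrans : ∀ a : ℝ, MemLp (fun x => F (a - x)) 2 volume := fun a =>
    hFL2.comp_measurePreserving (Measure.measurePreserving_sub_left volume a)
  have hslice : ∀ u : ℝ × ℝ, Integrable (fun x => G (u, x)) ν := by
    intro u
    rw [hwd]
    have : (fun x => G (u, x) * ϖ x) = fun x => F (u.1 - x) * F (u.2 - x) := by
      funext x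
      simp only [hGdef]
      rw [div_mul_cancel₀ _ (hϖpos x).ne']
    rw [this]
    exact l2_mul_integrable (hFtrans u.1) (hFtrans u.2)
  -- integrability on the product
  set C : ℝ := ∫ y, F y ^ 2 with hCdef
  have hFsq : Integrable (fun y => F y ^ 2) volume := hFL2.integrable_sq
  have hFsqt : ∀ a : ℝ, (∫ x, F (a - x) ^ 2) = C :=
    fun a => integral_sub_left_eq_self (fun y => F y ^ 2) volume a
  have hnorm : ∀ u : ℝ × ℝ, (∫ x, ‖G (u, x)‖ ∂ν) ≤ C := by
    intro u
    have hii : Integrable (fun x => ‖G (u, x)‖) ν := (hslice u).norm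
    have h2 : (∫ x, ‖G (u, x)‖ ∂ν) = ∫ x, |F (u.1 - x) * F (u.2 - x)| := by
      rw [hνdef]
      rw [show (fun x => ENNReal.ofReal (ϖ x)) = (fun x => ((ϖ x).toNNReal : ENNReal)) from rfl]
      rw [integral_withDensity_eq_integral_smul hϖmeas.real_toNNReal]
      congr 1; funext x
      rw [NNReal.smul_def, Real.coe_toNNReal _ (hϖpos x).le]
      simp only [hGdef, smul_eq_mul, Real.norm_eq_abs, abs_div, abs_of_pos (hϖpos x)]
      rw [mul_div_assoc', mul_div_cancel_left₀ _ (hϖpos x).ne', abs_mul]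
    rw [h2]
    have hbound : ∀ x : ℝ, |F (u.1 - x) * F (u.2 - x)|
        ≤ (F (u.1 - x) ^ 2 + F (u.2 - x) ^ 2) / 2 := by
      intro x
      rw [abs_mul]
      nlinarith [sq_nonneg (|F (u.1 - x)| - |F (u.2 - x)|), sq_abs (F (u.1 - x)),
        sq_abs (F (u.2 - x)), abs_nonneg (F (u.1 - x)), abs_nonneg (F (u.2 - x))]
    have hint1 : Integrable (fun x => |F (u.1 - x) * F (u.2 - x)|) volume :=
      (l2_mul_integrable (hFtrans u.1) (hFtrans u.2)).abs
    have hint2 : Integrable (fun x => (F (u.1 - x) ^ 2 + F (u.2 - x) ^ 2) / 2) volume :=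
      (((hFtrans u.1).integrable_sq).add ((hFtrans u.2).integrable_sq)).div_const 2
    calc (∫ x, |F (u.1 - x) * F (u.2 - x)|)
        ≤ ∫ x, (F (u.1 - x) ^ 2 + F (u.2 - x) ^ 2) / 2 :=
          integral_mono hint1 hint2 hbound
      _ = ((∫ x, F (u.1 - x) ^ 2) + ∫ x, F (u.2 - x) ^ 2) / 2 := by
          rw [integral_div, integral_add ((hFtrans u.1).integrable_sq)
            ((hFtrans u.2).integrable_sq)]
      _ = C := by rw [hFsqt u.1, hFsqt u.2]; ring
  have hGint : Integrable G (μ₂.prod ν) := by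
    rw [integrable_prod_iff hGmeas.aestronglyMeasurable]
    refine ⟨Filter.Eventually.of_forall hslice, ?_⟩
    refine Integrable.mono' (integrable_const C)
      (hGmeas.norm.aestronglyMeasurable.integral_prod_right')
      (Filter.Eventually.of_forall fun u => ?_)
    rw [Real.norm_of_nonneg (integral_nonneg fun x => norm_nonneg _)]
    exact hnorm u
  -- chain of equalities
  calc ∫ ω, Y₁ ω * Y₂ ω ∂ℙ
      = ∫ ω, G (P ω) ∂ℙ := integral_congr_ae stepae
    _ = ∫ p, G p ∂(μ₂.prod ν) := by
        rw [← hmap, integral_map hPmeas.aemeasurable hGmeas.aestronglyMeasurable]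
    _ = ∫ u, ∫ x, G (u, x) ∂ν ∂μ₂ := integral_prod G hGint
    _ = ∫ u, ψ (u.1 - u.2) ∂μ₂ := by
        congr 1; funext u; exact hinner u
    _ = ∫ ω, ψ (U₁ ω - U₂ ω) ∂ℙ := by
        rw [hμ₂def]
        exact integral_map hVmeas.aemeasurable
          ((hψmeas.comp (measurable_fst.sub measurable_snd)).aestronglyMeasurable)
    _ = ∫ h, ψ h ∂(gaussianReal 0 d) := by
        rw [← hU, integral_map (φ := fun x => U₁ x - U₂ x) (hU₁meas.sub hU₂meas).aemeasurable
          hψmeas.aestronglyMeasurable]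
    _ = ∫ z, ψ (Real.sqrt d * z) ∂(gaussianReal 0 1) := by
        have hmapg : (gaussianReal 0 1).map (fun z => Real.sqrt d * z) = gaussianReal 0 d := by
          have h := gaussianReal_map_const_mul (μ := 0) (v := 1) (Real.sqrt d)
          have hvar : (⟨(Real.sqrt d) ^ 2, sq_nonneg _⟩ : ℝ≥0) * 1 = d := by
            ext
            simp [Real.sq_sqrt d.coe_nonneg]
          rw [mul_zero] at h
          exact h.trans (congrArg (gaussianReal 0) hvar)
        rw [← hmapg, integral_map (measurable_const_mul (Real.sqrt d : ℝ)).aemeasurable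
          hψmeas.aestronglyMeasurable]
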